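/- Let D = (C_1,…,C_r) be a northwest diagram with pairwise distinct columns. Then for all 1 ≤ j < j' ≤ r, either C_j <lex C_{j'}, or C_{j'} is an initial subset of C_j. -/

import Mathlib

/-- A diagram, given as a list of columns `C : Fin r → Finset ℕ`, is *northwest* if
for all `j ≤ j'`, `i ∈ C j` and `i' ∈ C j'` imply `min i i' ∈ C j`. -/
def IsNorthwest {r : ℕ} (C : Fin r → Finset ℕ) : Prop :=
  ∀ j j' : Fin r, j ≤ j' → ∀ i ∈ C j, ∀ i' ∈ C j', min i i' ∈ C j

/-- `A` is an *initial subset* of `B` : `A ⊊ B` and every element of `B \ A` is greater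
than every element of `A`. -/
def InitSub (A B : Finset ℕ) : Prop :=
  A ⊂ B ∧ ∀ x ∈ B \ A, ∀ y ∈ A, y < x

/-- Lexicographic comparison of finite subsets of `ℕ`, comparing the increasing lists of
elements: `A <lex B` iff the sorted list of `A` is smaller than that of `B` in the
(strict) lexicographic order on lists (in particular a proper initial segment is
smaller). -/
def LexLT (A B : Finset ℕ) : Prop :=
  List.Lex (· < ·) (A.sort (· ≤ ·)) (B.sort (· ≤ ·))

/-- A list of columns is *lexicographic* if it is strictly increasing in `LexLT`
(in particular the columns are pairwise distinct). -/
def IsLex {r : ℕ} (C : Fin r → Finset ℕ) : Prop :=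
  ∀ a b : Fin r, a < b → LexLT (C a) (C b)

/-- List version: if every element of `lb` not in `la` exceeds every element of `la`,
then `la` is lex-smaller than `lb` or `lb` is a prefix of `la`. -/
lemma lex_or_prefix_of_sorted : ∀ (la lb : List ℕ), la.Pairwise (· < ·) → lb.Pairwise (· < ·) →
    (∀ x ∈ lb, x ∉ la → ∀ y ∈ la, y < x) →
    List.Lex (· < ·) la lb ∨ lb <+: la := by
  intro la
  induction la with
  | nil =>
    intro lb _ _ _
    cases lb with
    | nil => right; exact List.prefix_rfl
    | cons x lb' => left; exact List.Lex.nil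
  | cons y la' ih =>
    intro lb hla hlb hK
    cases lb with
    | nil => right; exact List.nil_prefix
    | cons x lb' =>
      rcases lt_trichotomy x y with h | h | h
      · exfalso
        have hx : x ∉ y :: la' := by
          intro hmem
          rcases List.mem_cons.mp hmem with rfl | hmem'
          · exact lt_irrefl x h
          · exact absurd h (not_lt.mpr (List.rel_of_pairwise_cons hla hmem').le)
        have := hK x List.mem_cons_self hx y List.mem_cons_self
        exact absurd h (not_lt.mpr this.le)
      · subst h
        have hK' : ∀ x' ∈ lb', x' ∉ la' → ∀ y' ∈ la', y' < x' := by
          intro x' hx' hnx' y' hy'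
          have hxx' := List.rel_of_pairwise_cons hlb hx'
          refine hK x' (List.mem_cons_of_mem _ hx') ?_ y' (List.mem_cons_of_mem _ hy')
          intro hmem
          rcases List.mem_cons.mp hmem with h2 | hmem'
          · subst h2; exact absurd hxx' (lt_irrefl _)
          · exact hnx' hmem'
        rcases ih lb' hla.of_cons hlb.of_cons hK' with h | h
        · left; exact List.Lex.cons h
        · right
          obtain ⟨t, rfl⟩ := h
          exact ⟨t, rfl⟩
      · left; exact List.Lex.rel h

/-- Part (a) of the Lemma on lexicographic rearrangement: in a northwest diagram with
pairwise distinct columns, for `a < b` either `C a <lex C b` or `C b` is an initial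
subset of `C a`. -/
theorem northwest_lex_or_initSub (r : ℕ) (C : Fin r → Finset ℕ)
    (hNW : IsNorthwest C) (hinj : Function.Injective C) :
    ∀ a b : Fin r, a < b → LexLT (C a) (C b) ∨ InitSub (C b) (C a) := by
  intro a b hab
  set A := C a with hA
  set B := C b with hB
  -- key: every element of B \ A exceeds every element of A
  have key : ∀ x ∈ B, x ∉ A → ∀ y ∈ A, y < x := by
    intro x hxB hxA y hyA
    have hmin : min y x ∈ A := hNW a b hab.le y hyA x hxB
    by_contra h
    push_neg at h
    have : min y x = x := min_eq_right h
    rw [this] at hmin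
    exact hxA hmin
  have hlaA : (A.sort (· ≤ ·)).Pairwise (· < ·) := A.sortedLT_sort.pairwise
  have hlbB : (B.sort (· ≤ ·)).Pairwise (· < ·) := B.sortedLT_sort.pairwise
  have hK : ∀ x ∈ B.sort (· ≤ ·), x ∉ A.sort (· ≤ ·) → ∀ y ∈ A.sort (· ≤ ·), y < x := by
    intro x hx hnx y hy
    exact key x ((Finset.mem_sort _).mp hx) (fun hxA => hnx ((Finset.mem_sort _).mpr hxA))
      y ((Finset.mem_sort _).mp hy)
  rcases lex_or_prefix_of_sorted _ _ hlaA hlbB hK with h | h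
  · left; exact h
  · right
    obtain ⟨t, ht⟩ := h
    have hBA : B ⊆ A := by
      intro x hx
      have : x ∈ A.sort (· ≤ ·) := by
        rw [← ht]; exact List.mem_append_left _ ((Finset.mem_sort _).mpr hx)
      exact (Finset.mem_sort _).mp this
    have hne : B ≠ A := fun hEq => absurd (hinj hEq) hab.ne'
    constructor
    · exact ⟨hBA, fun hAB => hne (le_antisymm hBA hAB)⟩
    · intro x hx y hy
      rw [Finset.mem_sdiff] at hx
      obtain ⟨hxA, hxB⟩ := hx
      have hxla : x ∈ A.sort (· ≤ ·) := (Finset.mem_sort _).mpr hxA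
      rw [← ht] at hxla
      have hxt : x ∈ t := by
        rcases List.mem_append.mp hxla with h' | h'
        · exact absurd ((Finset.mem_sort _).mp h') hxB
        · exact h'
      have hyl : y ∈ B.sort (· ≤ ·) := (Finset.mem_sort _).mpr hy
      have := hlaA
      rw [← ht] at this
      have hp := (List.pairwise_append.mp this).2.2
      exact hp y hyl x hxt
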